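/- Let b ≥ 2 be an integer and let p/q < a/b < r/s be three consecutive fractions in the Farey sequence of order b (so that qa − pb = 1 and br − as = 1). Then for all integers e ≥ 0 and e' ≥ 0, the fractions (p + ea)/(q + eb) and (r + e'a)/(s + e'b) are similarly ordered; that is, ((r + e'a) − (p + ea)) · ((s + e'b) − (q + eb)) ≥ 0. -/

import Mathlib

/-- The Farey fractions of order `n`: the rationals in `[0,1]` whose (reduced) denominator
is at most `n`. -/
def fareySet (n : ℕ) : Finset ℚ :=
  ((Finset.range (n + 1) ×ˢ Finset.range (n + 1)).image fun p => (p.1 : ℚ) / (p.2 : ℚ)).filter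
    fun q => 0 ≤ q ∧ q ≤ 1 ∧ q.den ≤ n

/-- The Farey sequence of order `n`: the Farey fractions of order `n` listed in
increasing order. -/
def fareyList (n : ℕ) : List ℚ := (fareySet n).sort (· ≤ ·)

/-- Two reduced fractions `q = a/b` and `q' = a'/b'` are similarly ordered if
`(a' - a) * (b' - b) ≥ 0`. -/
def SimilarlyOrdered (q q' : ℚ) : Prop :=
  0 ≤ (q'.num - q.num) * ((q'.den : ℤ) - (q.den : ℤ))

lemma num_le_den_of_le_one {x : ℚ} (h1 : x ≤ 1) : x.num ≤ (x.den : ℤ) := by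
  have hd : (0:ℚ) < (x.den : ℚ) := by exact_mod_cast x.pos
  have h2 : (x.num : ℚ) ≤ (x.den : ℚ) := by
    rw [← Rat.num_div_den x, div_le_one hd] at h1
    exact h1
  exact_mod_cast h2

lemma mem_fareySet {n : ℕ} {x : ℚ} :
    x ∈ fareySet n ↔ 0 ≤ x ∧ x ≤ 1 ∧ x.den ≤ n := by
  constructor
  · exact fun hx => (Finset.mem_filter.mp hx).2
  · rintro ⟨h0, h1, hd⟩
    refine Finset.mem_filter.mpr ⟨?_, h0, h1, hd⟩
    refine Finset.mem_image.mpr ⟨(x.num.toNat, x.den), ?_, ?_⟩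
    · have hnum : 0 ≤ x.num := Rat.num_nonneg.mpr h0
      have hnd : x.num ≤ (x.den : ℤ) := num_le_den_of_le_one h1
      exact Finset.mem_product.mpr
        ⟨Finset.mem_range.mpr (by omega), Finset.mem_range.mpr (by omega)⟩
    · have hnum : 0 ≤ x.num := Rat.num_nonneg.mpr h0
      simp only
      rw [show ((x.num.toNat : ℕ) : ℚ) = ((x.num : ℤ) : ℚ) by
        exact_mod_cast congrArg (Int.cast : ℤ → ℚ) (Int.toNat_of_nonneg hnum)]
      exact Rat.num_div_den x

lemma lt_iff_cross {x y : ℚ} : x < y ↔ x.num * (y.den : ℤ) < y.num * (x.den : ℤ) := by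
  have hx : (0:ℚ) < (x.den : ℚ) := by exact_mod_cast x.pos
  have hy : (0:ℚ) < (y.den : ℚ) := by exact_mod_cast y.pos
  rw [show x < y ↔ (x.num : ℚ) / (x.den : ℚ) < (y.num : ℚ) / (y.den : ℚ) by
    rw [Rat.num_div_den, Rat.num_div_den], div_lt_div_iff₀ hx hy]
  exact_mod_cast Iff.rfl

/-- For adjacent elements of the Farey set of order `n`, the cross-difference is `1`,
and the denominators sum to more than `n`. -/
lemma adjacent_unimodular {n : ℕ} {u v : ℚ} (hu : u ∈ fareySet n) (hv : v ∈ fareySet n)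
    (huv : u < v) (hadj : ∀ w ∈ fareySet n, ¬(u < w ∧ w < v)) :
    v.num * (u.den : ℤ) - u.num * (v.den : ℤ) = 1 ∧ (n : ℤ) < (u.den : ℤ) + (v.den : ℤ) := by
  obtain ⟨hu0, hu1, hud⟩ := mem_fareySet.mp hu
  obtain ⟨hv0, hv1, hvd⟩ := mem_fareySet.mp hv
  set p : ℤ := u.num with hp
  set q : ℤ := (u.den : ℤ) with hq
  have hq0 : 0 < q := hq ▸ Int.natCast_pos.mpr u.pos
  have hqn : q ≤ (n : ℤ) := hq ▸ Int.ofNat_le.mpr hud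
  have hvdn : (v.den : ℤ) ≤ (n : ℤ) := Int.ofNat_le.mpr hvd
  -- Bezout
  have hcop : Int.gcd p q = 1 := by rw [hp, hq]; simpa [Int.gcd] using u.reduced
  obtain ⟨r0, s0, hbez⟩ : ∃ r0 s0 : ℤ, q * r0 - p * s0 = 1 := by
    have h := Int.gcd_eq_gcd_ab p q
    refine ⟨Int.gcdB p q, -Int.gcdA p q, ?_⟩
    rw [hcop] at h
    push_cast at h
    linarith [h]
  -- shift so that n - q < s ≤ n
  obtain ⟨r, s, hsn, hsq, hs0, hbez'⟩ :
      ∃ r s : ℤ, s ≤ (n : ℤ) ∧ (n : ℤ) - q < s ∧ 0 < s ∧ q * r - p * s = 1 := by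
    refine ⟨r0 + (((n : ℤ) - s0) / q) * p, s0 + (((n : ℤ) - s0) / q) * q, ?_, ?_, ?_, ?_⟩
    · have h1 := Int.emod_nonneg ((n : ℤ) - s0) (by omega : q ≠ 0)
      have h2 := Int.emod_def ((n : ℤ) - s0) q
      nlinarith [h1, h2]
    · have h1 := Int.emod_lt_of_pos ((n : ℤ) - s0) hq0
      have h2 := Int.emod_def ((n : ℤ) - s0) q
      nlinarith [h1, h2]
    · have h1 := Int.emod_lt_of_pos ((n : ℤ) - s0) hq0
      have h2 := Int.emod_def ((n : ℤ) - s0) q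
      nlinarith [h1, h2, hqn]
    · linear_combination hbez
  clear hbez
  have hcop' : Nat.Coprime r.natAbs s.natAbs := by
    have h1 : Int.gcd r s = 1 := by
      rw [← Int.isCoprime_iff_gcd_eq_one]
      exact ⟨q, -p, by linarith⟩
    exact h1
  set w : ℚ := (r : ℚ) / (s : ℚ) with hw
  have hwnum : w.num = r := Rat.num_div_eq_of_coprime hs0 hcop'
  have hwden : (w.den : ℤ) = s := Rat.den_div_eq_of_coprime hs0 hcop'
  have huw : u < w := by
    rw [lt_iff_cross, hwnum, hwden]
    nlinarith [hbez']
  have hbig : ∀ x : ℚ, u < x → x < w → (n : ℤ) < (x.den : ℤ) := by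
    intro x h1 h2
    rw [lt_iff_cross] at h1 h2
    rw [hwnum, hwden] at h2
    rw [← hp, ← hq] at h1
    have key : (x.den : ℤ) =
        q * (r * (x.den : ℤ) - x.num * s) + s * (x.num * q - p * (x.den : ℤ)) := by
      linear_combination (-(x.den : ℤ)) * hbez'
    have h3 : 1 ≤ r * (x.den : ℤ) - x.num * s := by linarith
    have h4 : 1 ≤ x.num * q - p * (x.den : ℤ) := by linarith
    nlinarith [key, h3, h4, hq0, hs0, hsq]
  rcases lt_trichotomy v w with hvw | hvw | hvw
  · exfalso
    have := hbig v huv hvw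
    omega
  · constructor
    · rw [hvw, hwnum, hwden]
      linear_combination hbez'
    · rw [hvw, hwden]
      omega
  · exfalso
    have hwmem : w ∈ fareySet n := by
      rw [mem_fareySet]
      refine ⟨le_of_lt (lt_of_le_of_lt hu0 huw), le_of_lt (lt_of_lt_of_le hvw hv1), ?_⟩
      omega
    exact hadj w hwmem ⟨huw, hvw⟩

lemma fareyList_adjacent {n : ℕ} {i : ℕ} (hi : i + 1 < (fareyList n).length) :
    ∀ w ∈ fareySet n,
      ¬((fareyList n).get ⟨i, by omega⟩ < w ∧ w < (fareyList n).get ⟨i + 1, hi⟩) := by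
  rintro w hw ⟨h1, h2⟩
  have hsort : (fareyList n).Pairwise (· < ·) := (Finset.sortedLT_sort _).pairwise
  have hmem : w ∈ fareyList n := (Finset.mem_sort _).mpr hw
  obtain ⟨k, hk⟩ := List.mem_iff_get.mp hmem
  have hmono := hsort.sortedLT.strictMono_get
  rw [← hk] at h1 h2
  have e1 := hmono.lt_iff_lt.mp h1
  have e2 := hmono.lt_iff_lt.mp h2
  simp only [Fin.lt_def] at e1 e2
  omega

lemma sign_lemma {p q r s : ℤ} (hp : 0 ≤ p) (hq : 1 ≤ q) (hs : 1 ≤ s)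
    (h : q * r - p * s = 1) : 0 ≤ (r - p) * (s - q) := by
  rcases le_or_gt r p with h1 | h1 <;> rcases le_or_gt s q with h2 | h2
  · nlinarith [mul_nonneg (by linarith : (0:ℤ) ≤ p - r) (by linarith : (0:ℤ) ≤ q - s)]
  · exfalso
    nlinarith [mul_le_mul_of_nonneg_left h1 (by linarith : (0:ℤ) ≤ q),
      mul_le_mul_of_nonneg_left (show q + 1 ≤ s by linarith) hp]
  · rcases eq_or_lt_of_le h2 with h2' | h2'
    · rw [h2']; simp
    · exfalso
      nlinarith [mul_le_mul (show s + 1 ≤ q by linarith) (show p + 1 ≤ r by linarith)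
        (by linarith) (by linarith)]
  · exact mul_nonneg (by linarith) (by linarith)

lemma key_ineq (P R Q S k : ℤ) (hP : 0 ≤ P) (hR : 0 ≤ R) (hQ : 0 ≤ Q) (hS : 0 ≤ S)
    (hsign : 0 ≤ (R - P) * (S - Q)) :
    0 ≤ (R - P + k * (P + R)) * (S - Q + k * (Q + S)) := by
  rcases lt_trichotomy k 0 with hk | rfl | hk
  · have hk1 : k ≤ -1 := by omega
    have f1 : R - P + k * (P + R) ≤ 0 := by nlinarith
    have f2 : S - Q + k * (Q + S) ≤ 0 := by nlinarith
    nlinarith [mul_nonneg (by linarith : (0:ℤ) ≤ -(R - P + k * (P + R)))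
      (by linarith : (0:ℤ) ≤ -(S - Q + k * (Q + S)))]
  · simpa using hsign
  · have hk1 : 1 ≤ k := hk
    have f1 : 0 ≤ R - P + k * (P + R) := by nlinarith
    have f2 : 0 ≤ S - Q + k * (Q + S) := by nlinarith
    exact mul_nonneg f1 f2

/-- Let `b ≥ 2` and let `p/q < a/b < r/s` be three consecutive fractions in the Farey
sequence of order `b` (the middle one having denominator exactly `b`). Then for all
integers `e, e' ≥ 0` the fractions `(p + ea)/(q + eb)` and `(r + e'a)/(s + e'b)` are
similarly ordered: `((r + e'a) − (p + ea)) · ((s + e'b) − (q + eb)) ≥ 0`. -/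
theorem farey_segment_similarly_ordered (b : ℕ) (hb : 2 ≤ b) (j : ℕ)
    (hj : j + 2 < (fareyList b).length)
    (hden : ((fareyList b).get ⟨j + 1, by omega⟩).den = b) (e e' : ℕ) :
    0 ≤ ((((fareyList b).get ⟨j + 2, hj⟩).num
            + (e' : ℤ) * ((fareyList b).get ⟨j + 1, by omega⟩).num)
          - (((fareyList b).get ⟨j, by omega⟩).num
            + (e : ℤ) * ((fareyList b).get ⟨j + 1, by omega⟩).num))
        * (((((fareyList b).get ⟨j + 2, hj⟩).den : ℤ) + (e' : ℤ) * (b : ℤ))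
          - ((((fareyList b).get ⟨j, by omega⟩).den : ℤ) + (e : ℤ) * (b : ℤ))) := by
  have hsort : (fareyList b).Pairwise (· < ·) := (Finset.sortedLT_sort _).pairwise
  set u : ℚ := (fareyList b).get ⟨j, by omega⟩ with hu_def
  set m : ℚ := (fareyList b).get ⟨j + 1, by omega⟩ with hm_def
  set v : ℚ := (fareyList b).get ⟨j + 2, hj⟩ with hv_def
  have hu : u ∈ fareySet b := (Finset.mem_sort _).mp (List.get_mem _ _)
  have hm : m ∈ fareySet b := (Finset.mem_sort _).mp (List.get_mem _ _)
  have hv : v ∈ fareySet b := (Finset.mem_sort _).mp (List.get_mem _ _)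
  have hum : u < m := hsort.rel_get_of_lt (by simp [Fin.lt_def])
  have hmv : m < v := hsort.rel_get_of_lt (by simp [Fin.lt_def])
  obtain ⟨h1, hd1⟩ := adjacent_unimodular hu hm hum (fareyList_adjacent (by omega))
  obtain ⟨h2, hd2⟩ := adjacent_unimodular hm hv hmv
    (fareyList_adjacent (i := j + 1) (by omega))
  rw [hden] at h1 h2 hd2
  obtain ⟨hu0, hu1, hud⟩ := mem_fareySet.mp hu
  obtain ⟨hv0, hv1, hvd⟩ := mem_fareySet.mp hv
  obtain ⟨hm0, hm1, hmd⟩ := mem_fareySet.mp hm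
  -- integer abbreviations
  have hP : 0 ≤ u.num := Rat.num_nonneg.mpr hu0
  have hR : 0 ≤ v.num := Rat.num_nonneg.mpr hv0
  have hQ1 : 1 ≤ (u.den : ℤ) := by exact_mod_cast u.pos
  have hS1 : 1 ≤ (v.den : ℤ) := by exact_mod_cast v.pos
  have hQb : (u.den : ℤ) ≤ b := by exact_mod_cast hud
  have hSb : (v.den : ℤ) ≤ b := by exact_mod_cast hvd
  have hb2 : (2 : ℤ) ≤ b := by exact_mod_cast hb
  -- b divides u.den + v.den
  have heq : m.num * ((u.den : ℤ) + v.den) = (b : ℤ) * (u.num + v.num) := by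
    linear_combination h1 - h2
  have hcopm : IsCoprime m.num ((b : ℤ)) := by
    rw [Int.isCoprime_iff_gcd_eq_one]
    have := m.reduced
    rw [hden] at this
    simpa [Int.gcd] using this
  have hdvd : (b : ℤ) ∣ (u.den : ℤ) + v.den := by
    have : (b : ℤ) ∣ m.num * ((u.den : ℤ) + v.den) := ⟨u.num + v.num, heq.symm ▸ rfl⟩
    exact (hcopm.symm.dvd_of_dvd_mul_left (heq ▸ Dvd.intro _ rfl))
  obtain ⟨c, hc⟩ := hdvd
  have hc12 : c = 1 ∨ c = 2 := by
    have hcle : c ≤ 2 := le_of_mul_le_mul_left (by linarith : (b:ℤ) * c ≤ (b:ℤ) * 2) (by omega)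
    have hcge : 1 ≤ c := by
      by_contra hcc
      push_neg at hcc
      have : (b:ℤ) * c ≤ 0 := mul_nonpos_of_nonneg_of_nonpos (by omega) (by omega)
      linarith
    omega
  have hsum : (u.den : ℤ) + v.den = b := by
    rcases hc12 with rfl | rfl
    · simpa using hc
    · exfalso
      have hud_eq : (u.den : ℤ) = b := by omega
      have : (b : ℤ) ∣ 1 := ⟨m.num - u.num, by linear_combination -h1 + m.num * hud_eq⟩
      have := Int.le_of_dvd one_pos this
      omega
  have hmed : m.num = u.num + v.num := by
    have hb0 : (b : ℤ) ≠ 0 := by omega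
    have : (b : ℤ) * m.num = (b : ℤ) * (u.num + v.num) := by linear_combination heq - m.num * hsum
    exact mul_left_cancel₀ hb0 this
  have huni : v.num * (u.den : ℤ) - u.num * (v.den : ℤ) = 1 := by
    linear_combination h1 - (u.den : ℤ) * hmed - u.num * hsum
  have hsign : 0 ≤ (v.num - u.num) * ((v.den : ℤ) - u.den) := by
    exact sign_lemma (r := v.num) hP hQ1 hS1 (by linear_combination huni)
  have hkey := key_ineq u.num v.num (u.den : ℤ) (v.den : ℤ) ((e' : ℤ) - e)
    hP hR (by linarith) (by linarith) hsign
  calc (0 : ℤ) ≤ (v.num - u.num + ((e' : ℤ) - e) * (u.num + v.num))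
        * ((v.den : ℤ) - u.den + ((e' : ℤ) - e) * ((u.den : ℤ) + v.den)) := hkey
    _ = (v.num + (e' : ℤ) * m.num - (u.num + (e : ℤ) * m.num))
        * (((v.den : ℤ) + (e' : ℤ) * b) - ((u.den : ℤ) + (e : ℤ) * b)) := by
        rw [hmed, ← hsum]; ring
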